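/- Every finite connected directed graph with loops G that has at least two vertices and at least one unlooped vertex is isomorphic to a Cartesian product of prime digraphs: there exist k ≥ 1 and prime digraphs G_1, …, G_k such that G ≅ ∏_{i∈Fin k} G_i. -/

import Mathlib

universe u

namespace Digraph

/-- Cartesian product of two digraphs. -/
def boxProd {α β : Type*} (G : Digraph α) (H : Digraph β) : Digraph (α × β) where
  Adj p q := (G.Adj p.1 q.1 ∧ p.2 = q.2) ∨ (p.1 = q.1 ∧ H.Adj p.2 q.2)

/-- Cartesian product of a family of digraphs. -/
def prodFam {I : Type*} {V : I → Type*} (G : ∀ i, Digraph (V i)) : Digraph (∀ i, V i) where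
  Adj u v := ∃ κ, (G κ).Adj (u κ) (v κ) ∧ ∀ i, i ≠ κ → u i = v i

/-- The shadow of a digraph: distinct vertices are adjacent iff there is an arc between them
in some direction. -/
def shadow {α : Type*} (G : Digraph α) : SimpleGraph α where
  Adj a b := a ≠ b ∧ (G.Adj a b ∨ G.Adj b a)
  symm := by
    constructor
    rintro a b ⟨hab, h⟩
    exact ⟨hab.symm, h.symm⟩
  loopless := by
    constructor
    rintro a ⟨ha, -⟩
    exact ha rfl

/-- A digraph is connected if its shadow is connected. -/
def Connected {α : Type*} (G : Digraph α) : Prop := G.shadow.Connected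

/-- Isomorphisms of digraphs. -/
abbrev Iso {α β : Type*} (G : Digraph α) (H : Digraph β) := RelIso G.Adj H.Adj

/-- A digraph is prime w.r.t. the Cartesian product if it is nontrivial, connected, has an
unlooped vertex, and in every representation as a product of two digraphs one factor
has exactly one vertex. -/
def IsPrime {α : Type u} (G : Digraph α) : Prop :=
  G.Connected ∧ Nontrivial α ∧ (∃ v, ¬ G.Adj v v) ∧
    ∀ {A B : Type u} (GA : Digraph A) (GB : Digraph B),
      Nonempty (G.Iso (GA.boxProd GB)) →
        (Nonempty A ∧ Subsingleton A) ∨ (Nonempty B ∧ Subsingleton B)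

/-- The vertex set of the connected component of `a` in the shadow of the product. -/
def weakComponent {I : Type*} {V : I → Type*} (G : ∀ i, Digraph (V i)) (a : ∀ i, V i) :
    Set (∀ i, V i) :=
  {v | (prodFam G).shadow.Reachable a v}

/-- The weak Cartesian product: the induced subdigraph of the Cartesian product on the
connected component (in the shadow) of the vertex `a`. -/
def weakProd {I : Type*} {V : I → Type*} (G : ∀ i, Digraph (V i)) (a : ∀ i, V i) :
    Digraph (weakComponent G a) where
  Adj u v := (prodFam G).Adj u.1 v.1

-- auxiliary lemmas

lemma shadow_boxProd {α β : Type*} (G : Digraph α) (H : Digraph β) :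
    (G.boxProd H).shadow = G.shadow.boxProd H.shadow := by
  ext ⟨a,b⟩ ⟨c,d⟩
  simp only [shadow, boxProd, SimpleGraph.boxProd_adj, ne_eq, Prod.mk.injEq, not_and]
  constructor
  · rintro ⟨hne, (⟨h1,h2⟩|⟨h1,h2⟩) | (⟨h1,h2⟩|⟨h1,h2⟩)⟩
    · exact Or.inl ⟨⟨fun e => hne e h2, Or.inl h1⟩, h2⟩
    · exact Or.inr ⟨⟨fun e => (hne h1 e).elim, Or.inl h2⟩, h1⟩
    · exact Or.inl ⟨⟨fun e => hne e h2.symm, Or.inr h1⟩, h2.symm⟩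
    · exact Or.inr ⟨⟨fun e => (hne h1.symm e).elim, Or.inr h2⟩, h1.symm⟩
  · rintro (⟨⟨hne, h|h⟩, h2⟩ | ⟨⟨hne, h|h⟩, h2⟩)
    · exact ⟨fun e _ => hne e, Or.inl (Or.inl ⟨h, h2⟩)⟩
    · exact ⟨fun e _ => hne e, Or.inr (Or.inl ⟨h, h2.symm⟩)⟩
    · exact ⟨fun _ e => hne e, Or.inl (Or.inr ⟨h2, h⟩)⟩
    · exact ⟨fun _ e => hne e, Or.inr (Or.inr ⟨h2.symm, h⟩)⟩

def Iso.shadowIso {α β : Type*} {G : Digraph α} {H : Digraph β} (φ : G.Iso H) :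
    G.shadow ≃g H.shadow where
  toEquiv := φ.toEquiv
  map_rel_iff' := by
    intro a b
    show (φ a ≠ φ b ∧ (H.Adj (φ a) (φ b) ∨ H.Adj (φ b) (φ a))) ↔ _
    rw [φ.map_rel_iff, φ.map_rel_iff]
    simp [shadow, φ.toEquiv.apply_eq_iff_eq]

lemma Connected.of_iso {α β : Type*} {G : Digraph α} {H : Digraph β} (φ : G.Iso H)
    (h : H.Connected) : G.Connected :=
  (φ.shadowIso.connected_iff).mpr h

def Iso.boxProdCongr {α α' β β' : Type*} {G : Digraph α} {G' : Digraph α'}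
    {H : Digraph β} {H' : Digraph β'} (φ : G.Iso G') (ψ : H.Iso H') :
    (G.boxProd H).Iso (G'.boxProd H') where
  toEquiv := φ.toEquiv.prodCongr ψ.toEquiv
  map_rel_iff' := by
    rintro ⟨a,b⟩ ⟨c,d⟩
    show (G'.Adj (φ a) (φ c) ∧ ψ b = ψ d) ∨ (φ a = φ c ∧ H'.Adj (ψ b) (ψ d)) ↔ _
    rw [φ.map_rel_iff, ψ.map_rel_iff]
    simp [boxProd, φ.toEquiv.apply_eq_iff_eq, ψ.toEquiv.apply_eq_iff_eq]

/-- product over `Fin 1`. -/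
def isoSingle {α : Type*} (G : Digraph α) : G.Iso (prodFam (fun _ : Fin 1 => G)) where
  toEquiv := (Equiv.funUnique (Fin 1) α).symm
  map_rel_iff' := by
    intro a b
    constructor
    · rintro ⟨κ, h, -⟩; exact h
    · intro h; exact ⟨0, h, fun i hi => absurd (Subsingleton.elim i 0) hi⟩

/-- product over a sum type splits as a box product. -/
def isoSum {I J : Type*} {V : I ⊕ J → Type*} (G : ∀ i, Digraph (V i)) :
    ((prodFam (fun i => G (.inl i))).boxProd (prodFam (fun j => G (.inr j)))).Iso
      (prodFam G) where
  toEquiv := (Equiv.sumPiEquivProdPi V).symm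
  map_rel_iff' := by
    rintro ⟨u1, u2⟩ ⟨v1, v2⟩
    simp only [Equiv.sumPiEquivProdPi, Equiv.coe_fn_symm_mk]
    constructor
    · rintro ⟨κ, h, heq⟩
      rcases κ with a | b
      · refine Or.inl ⟨⟨a, h, fun i hi => heq (.inl i) (by simp [hi])⟩, ?_⟩
        funext j; exact heq (.inr j) (by simp)
      · refine Or.inr ⟨?_, ⟨b, h, fun j hj => heq (.inr j) (by simp [hj])⟩⟩
        funext i; exact heq (.inl i) (by simp)
    · rintro (⟨⟨a, h, heq⟩, h2⟩ | ⟨h2, ⟨b, h, heq⟩⟩)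
      · refine ⟨.inl a, h, ?_⟩
        rintro (i | j) hi
        · exact heq i (by simpa using hi)
        · exact congrFun h2 j
      · refine ⟨.inr b, h, ?_⟩
        rintro (i | j) hj
        · exact congrFun h2 i
        · exact heq j (by simpa using hj)

/-- reindexing a product along an equivalence. -/
def isoReindex {I J : Type*} {V : I → Type*} (G : ∀ i, Digraph (V i)) (e : I ≃ J) :
    (prodFam G).Iso (prodFam (fun j => G (e.symm j))) where
  toEquiv := Equiv.piCongrLeft' V e
  map_rel_iff' := by
    intro u v
    simp only [Equiv.piCongrLeft', Equiv.coe_fn_mk]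
    constructor
    · rintro ⟨κ', h, heq⟩
      refine ⟨e.symm κ', h, fun i hi => ?_⟩
      have h2 := heq (e i) (fun hh => hi (by rw [← hh]; simp))
      change u (e.symm (e i)) = v (e.symm (e i)) at h2
      rwa [e.symm_apply_apply] at h2
    · rintro ⟨κ, h, heq⟩
      refine ⟨e κ, ?_, fun j hj => heq _ (fun hh => hj (by rw [← hh]; simp))⟩
      change (G (e.symm (e κ))).Adj (u (e.symm (e κ))) (v (e.symm (e κ)))
      rw [e.symm_apply_apply]; exact h


end Digraph

open Digraph in
private theorem factor_aux : ∀ n : ℕ, ∀ {V : Type u} [Fintype V] (G : Digraph V),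
    Fintype.card V = n → G.Connected → Nontrivial V → (∃ v, ¬ G.Adj v v) →
    ∃ k : ℕ, 1 ≤ k ∧ ∃ (W : Fin k → Type u) (Gs : ∀ i, Digraph (W i)),
      (∀ i, (Gs i).IsPrime) ∧ Nonempty (G.Iso (Digraph.prodFam Gs)) := by
  intro n
  induction n using Nat.strong_induction_on with
  | _ n ih =>
    intro V _ G hcard hconn hnt hul
    by_cases hp : G.IsPrime
    · exact ⟨1, le_refl 1, fun _ => V, fun _ => G, fun _ => hp, ⟨isoSingle G⟩⟩
    have hnp : ∃ (A B : Type u) (GA : Digraph A) (GB : Digraph B),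
        Nonempty (G.Iso (GA.boxProd GB)) ∧ ¬(Nonempty A ∧ Subsingleton A) ∧
          ¬(Nonempty B ∧ Subsingleton B) := by
      by_contra hc
      push_neg at hc
      apply hp
      refine ⟨hconn, hnt, hul, ?_⟩
      intro A B GA GB hiso
      by_cases hL : Nonempty A ∧ Subsingleton A
      · exact Or.inl hL
      by_cases hR : Nonempty B ∧ Subsingleton B
      · exact Or.inr hR
      exfalso
      revert hiso hL hR
      have := hc A B GA GB
      push_neg at ⊢
      intro hiso hL hR
      exact (not_nontrivial_iff_subsingleton.mpr (this hiso hL).2) (hR (this hiso hL).1)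
    obtain ⟨A, B, GA, GB, ⟨φ⟩, hA, hB⟩ := hnp
    classical
    have hV : Nonempty V := hnt.to_nonempty
    obtain ⟨v0⟩ := hV
    have hnA : Nonempty A := ⟨(φ v0).1⟩
    have hnB : Nonempty B := ⟨(φ v0).2⟩
    have hntA : Nontrivial A := not_subsingleton_iff_nontrivial.mp (fun h => hA ⟨hnA, h⟩)
    have hntB : Nontrivial B := not_subsingleton_iff_nontrivial.mp (fun h => hB ⟨hnB, h⟩)
    letI hftAB : Fintype (A × B) := Fintype.ofEquiv V φ.toEquiv
    letI hftA : Fintype A := @Fintype.prodLeft _ _ _ hftAB _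
    letI hftB : Fintype B := @Fintype.prodRight _ _ _ hftAB _
    -- connectivity of the factors
    have hc2 : (GA.boxProd GB).Connected := Connected.of_iso φ.symm hconn
    rw [Connected, shadow_boxProd] at hc2
    obtain ⟨hcA, hcB⟩ := (SimpleGraph.connected_boxProd).mp hc2
    -- unlooped vertices in factors
    obtain ⟨v, hv⟩ := hul
    have hv' : ¬ (GA.boxProd GB).Adj (φ v) (φ v) := fun h => hv (φ.map_rel_iff.mp h)
    have hvA : ¬ GA.Adj (φ v).1 (φ v).1 := fun h => hv' (Or.inl ⟨h, rfl⟩)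
    have hvB : ¬ GB.Adj (φ v).2 (φ v).2 := fun h => hv' (Or.inr ⟨rfl, h⟩)
    -- cardinalities
    have hcardAB : n = Fintype.card A * Fintype.card B := by
      rw [← hcard, ← Nat.card_eq_fintype_card, ← Nat.card_eq_fintype_card,
        ← Nat.card_eq_fintype_card, ← Nat.card_prod]
      exact Nat.card_congr φ.toEquiv
    have h2A : 2 ≤ Fintype.card A := Fintype.one_lt_card
    have h2B : 2 ≤ Fintype.card B := Fintype.one_lt_card
    have hltA : Fintype.card A < n := by
      rw [hcardAB]
      nlinarith [h2A, h2B]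
    have hltB : Fintype.card B < n := by
      rw [hcardAB]
      nlinarith [h2A, h2B]
    obtain ⟨k1, hk1, W1, Gs1, hp1, ⟨ψ1⟩⟩ :=
      ih (Fintype.card A) hltA GA rfl hcA hntA ⟨(φ v).1, hvA⟩
    obtain ⟨k2, hk2, W2, Gs2, hp2, ⟨ψ2⟩⟩ :=
      ih (Fintype.card B) hltB GB rfl hcB hntB ⟨(φ v).2, hvB⟩
    -- combine
    let W' : Fin k1 ⊕ Fin k2 → Type u := Sum.elim W1 W2
    let Gs' : ∀ s, Digraph (W' s) := fun s =>
      match s with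
      | .inl i => Gs1 i
      | .inr j => Gs2 j
    refine ⟨k1 + k2, by omega, fun j => W' (finSumFinEquiv.symm j),
      fun j => Gs' (finSumFinEquiv.symm j), ?_, ?_⟩
    · intro j
      rcases h : finSumFinEquiv.symm j with i | i
      · show (Gs' (finSumFinEquiv.symm j)).IsPrime
        rw [h]; exact hp1 i
      · show (Gs' (finSumFinEquiv.symm j)).IsPrime
        rw [h]; exact hp2 i
    · refine ⟨((φ.trans (Iso.boxProdCongr ψ1 ψ2)).trans (isoSum Gs')).trans
        (isoReindex Gs' finSumFinEquiv)⟩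


/-- Every finite connected digraph with at least two vertices and an unlooped vertex is
isomorphic to a Cartesian product of prime digraphs. -/
theorem exists_prime_factorization {V : Type u} [Fintype V] (G : Digraph V)
    (hconn : G.Connected) (hnt : Nontrivial V) (hul : ∃ v, ¬ G.Adj v v) :
    ∃ k : ℕ, 1 ≤ k ∧ ∃ (W : Fin k → Type u) (Gs : ∀ i, Digraph (W i)),
      (∀ i, (Gs i).IsPrime) ∧ Nonempty (G.Iso (Digraph.prodFam Gs)) := by
  exact factor_aux (Fintype.card V) G rfl hconn hnt hul
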